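/- Let p be a prime, e ≥ 1, q = p^e, and 1 ≤ m, n ≤ q-1; let d = gcd(q-1, m, n), and let q_s = (q-1)/(p^{e_s}-1) be the largest among the numbers q_i = (q-1)/(p^{e_i}-1) (over positive divisors e_i of e) that divides d. Then for every vertex (u,v) of the monomial digraph D(q;m,n), the vertex set of the strong component containing (u,v) equals {(x, v + c) : x ∈ F_q, c ∈ K} ∪ {(x, -v + c) : x ∈ F_q, c ∈ K}, where K = {y ∈ F_q : y^{p^{e_s}} = y} is the subfield of F_q with p^{e_s} elements. In particular, D(q;m,n) is strongly connected if and only if q_s = 1 (equivalently, e_s = e). -/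

import Mathlib

open Relation

-- p^a - 1 ∣ p^b - 1 → a ∣ b
lemma aux_nt1 {p a b : ℕ} (hp : 2 ≤ p) (ha : 1 ≤ a) (h : p ^ a - 1 ∣ p ^ b - 1) : a ∣ b := by
  rcases Nat.eq_zero_or_pos b with hb | hb
  · simp [hb]
  set r := b % a with hr
  have hdiv : b = a * (b / a) + r := (Nat.div_add_mod b a).symm ▸ by omega
  have h1 : p ^ a - 1 ∣ p ^ (a * (b / a)) - 1 := by
    have := Nat.sub_dvd_pow_sub_pow (p ^ a) 1 (b / a)
    simpa [← pow_mul] using this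
  have hpb : p ^ b = p ^ r * p ^ (a * (b / a)) := by
    rw [← pow_add]; congr 1; omega
  have h2 : p ^ a - 1 ∣ p ^ b - p ^ r := by
    have : p ^ b - p ^ r = p ^ r * (p ^ (a * (b / a)) - 1) := by
      rw [Nat.mul_sub, ← hpb, mul_one]
    rw [this]
    exact Dvd.dvd.mul_left h1 _
  have h3 : p ^ a - 1 ∣ p ^ r - 1 := by
    have heq : p ^ r - 1 = (p ^ b - 1) - (p ^ b - p ^ r) := by
      have h4 : p ^ r ≤ p ^ b := Nat.pow_le_pow_right (by omega) (Nat.mod_le b a)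
      have h5 : 1 ≤ p ^ r := Nat.one_le_pow _ _ (by omega)
      omega
    rw [heq]; exact Nat.dvd_sub h h2
  have hrlt : r < a := Nat.mod_lt _ (by omega)
  have : p ^ r - 1 < p ^ a - 1 := by
    have := Nat.pow_lt_pow_right (by omega : 1 < p) hrlt
    have : p ^ r < p ^ a := this
    have h5 : 1 ≤ p ^ r := Nat.one_le_pow _ _ (by omega)
    omega
  have hr0 : p ^ r - 1 = 0 := by
    by_contra hne
    exact absurd (Nat.le_of_dvd (by omega) h3) (by omega)
  have : r = 0 := by
    have h5 : 1 ≤ p ^ r := Nat.one_le_pow _ _ (by omega)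
    have : p ^ r = 1 := by omega
    rcases Nat.eq_zero_or_pos r with h | h
    · exact h
    · exfalso
      have := Nat.one_lt_pow (by omega : r ≠ 0) (by omega : 1 < p)
      omega
  exact Nat.dvd_of_mod_eq_zero this

-- a ∣ b → p^a - 1 ∣ p^b - 1
lemma aux_nt2 {p a b : ℕ} (h : a ∣ b) : p ^ a - 1 ∣ p ^ b - 1 := by
  obtain ⟨k, rfl⟩ := h
  have := Nat.sub_dvd_pow_sub_pow (p ^ a) 1 k
  simpa [← pow_mul] using this

-- card of {c | c^N = c} is at most N
lemma aux_card_fix {F : Type*} [Field F] [Fintype F] {N : ℕ} (hN : 2 ≤ N) :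
    {c : F | c ^ N = c}.ncard ≤ N := by
  classical
  set f : Polynomial F := Polynomial.X ^ N - Polynomial.X with hf
  have hfne : f ≠ 0 := by
    intro h
    have : f.coeff N = 0 := by rw [h]; simp
    rw [hf] at this
    rw [Polynomial.coeff_sub, Polynomial.coeff_X_pow, Polynomial.coeff_X, if_pos rfl,
      if_neg (by omega : ¬ (1 = N))] at this
    simp at this
  have hdeg : f.natDegree ≤ N := by
    apply le_trans (Polynomial.natDegree_sub_le _ _)
    simp [Polynomial.natDegree_X_pow]
    omega
  have hsub : {c : F | c ^ N = c} ⊆ ↑f.roots.toFinset := by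
    intro c hc
    simp only [Multiset.mem_toFinset, Finset.coe_sort_coe, Finset.mem_coe]
    rw [Polynomial.mem_roots hfne]
    simp only [hf, Polynomial.IsRoot, Polynomial.eval_sub, Polynomial.eval_pow,
      Polynomial.eval_X, sub_eq_zero]
    exact hc
  calc {c : F | c ^ N = c}.ncard ≤ f.roots.toFinset.card := by
        simpa using Set.ncard_le_ncard hsub (Set.toFinite _)
    _ ≤ Multiset.card f.roots := f.roots.toFinset_card_le
    _ ≤ f.natDegree := f.card_roots'
    _ ≤ N := hdeg

section Reach
variable {F : Type*} [Field F] {m n : ℕ}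

lemma aux_reach_first (hm : 1 ≤ m) (hn : 1 ≤ n) (z : F × F) (x : F) :
    ReflTransGen (fun z w : F × F => z.2 + w.2 = z.1 ^ m * w.1 ^ n) z (x, z.2) := by
  have h1 : (fun z w : F × F => z.2 + w.2 = z.1 ^ m * w.1 ^ n) z (0, -z.2) := by
    simp [zero_pow (by omega : n ≠ 0)]
  have h2 : (fun z w : F × F => z.2 + w.2 = z.1 ^ m * w.1 ^ n) (0, -z.2) (x, z.2) := by
    simp [zero_pow (by omega : m ≠ 0)]
  exact ReflTransGen.head h1 (ReflTransGen.single h2)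

lemma aux_reach_symm_single (hm : 1 ≤ m) (hn : 1 ≤ n) {z w : F × F}
    (h : z.2 + w.2 = z.1 ^ m * w.1 ^ n) :
    ReflTransGen (fun z w : F × F => z.2 + w.2 = z.1 ^ m * w.1 ^ n) w z := by
  have h1 := aux_reach_first hm hn w z.1
  have h2 : (fun z w : F × F => z.2 + w.2 = z.1 ^ m * w.1 ^ n) (z.1, w.2) (w.1, z.2) := by
    simpa [add_comm] using h
  have h3 := aux_reach_first hm hn ((w.1, z.2) : F × F) z.1
  exact (h1.tail h2).trans h3

lemma aux_reach_symm (hm : 1 ≤ m) (hn : 1 ≤ n) {z w : F × F}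
    (h : ReflTransGen (fun z w : F × F => z.2 + w.2 = z.1 ^ m * w.1 ^ n) z w) :
    ReflTransGen (fun z w : F × F => z.2 + w.2 = z.1 ^ m * w.1 ^ n) w z := by
  induction h with
  | refl => exact .refl
  | tail h1 h2 ih => exact .trans (aux_reach_symm_single hm hn h2) ih

lemma aux_reach_of_closure (hm : 1 ≤ m) (hn : 1 ≤ n) (u v : F) (c : F)
    (hc : c ∈ AddSubgroup.closure {a : F | ∃ x y : F, x ^ m * y ^ n = a}) (x : F) :
    ReflTransGen (fun z w : F × F => z.2 + w.2 = z.1 ^ m * w.1 ^ n) (u, v) (x, v + c) ∧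
    ReflTransGen (fun z w : F × F => z.2 + w.2 = z.1 ^ m * w.1 ^ n) (u, v) (x, -v + c) := by
  set T : Set F := {s | ReflTransGen
    (fun z w : F × F => z.2 + w.2 = z.1 ^ m * w.1 ^ n) (u, v) (u, s)} with hT
  have hvT : v ∈ T := ReflTransGen.refl
  have hstep : ∀ s ∈ T, ∀ x' y' : F, x' ^ m * y' ^ n - s ∈ T := by
    intro s hs x' y'
    have h1 := aux_reach_first hm hn ((u, s) : F × F) x'
    have h2 : (fun z w : F × F => z.2 + w.2 = z.1 ^ m * w.1 ^ n)
        (x', s) (y', x' ^ m * y' ^ n - s) := by simp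
    have h3 := aux_reach_first hm hn ((y', x' ^ m * y' ^ n - s) : F × F) u
    exact ((hs.trans h1).tail h2).trans h3
  have hneg : ∀ s ∈ T, -s ∈ T := by
    intro s hs
    simpa [zero_pow (by omega : m ≠ 0)] using hstep s hs 0 0
  have key : ∀ c' ∈ AddSubgroup.closure {a : F | ∃ x y : F, x ^ m * y ^ n = a},
      ∀ s ∈ T, s + c' ∈ T ∧ s - c' ∈ T := by
    intro c' hc'
    induction hc' using AddSubgroup.closure_induction with
    | mem a ha =>
      obtain ⟨x', y', rfl⟩ := ha
      intro s hs
      constructor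
      · have := hstep (-s) (hneg s hs) x' y'
        rwa [sub_neg_eq_add, add_comm] at this
      · have := hneg _ (hstep s hs x' y')
        rwa [neg_sub] at this
    | zero => intro s hs; exact ⟨by simpa using hs, by simpa using hs⟩
    | add c1 c2 h1 h2 ih1 ih2 =>
      intro s hs
      constructor
      · have := (ih2 _ (ih1 s hs).1).1
        rwa [add_assoc] at this
      · have := (ih2 _ (ih1 s hs).2).2
        rwa [sub_add_eq_sub_sub]
    | neg c1 h1 ih1 =>
      intro s hs
      refine ⟨?_, ?_⟩
      · have := (ih1 s hs).2
        rwa [sub_eq_add_neg] at this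
      · have := (ih1 s hs).1
        rwa [← sub_neg_eq_add] at this
  have hvc : v + c ∈ T := (key c hc v hvT).1
  have hnvc : -v + c ∈ T := (key c hc (-v) (hneg v hvT)).1
  exact ⟨hvc.trans (aux_reach_first hm hn _ x), hnvc.trans (aux_reach_first hm hn _ x)⟩

end Reach

lemma aux_invariant {F : Type*} [Field F] {m n N : ℕ} (hN : 1 ≤ N)
    (hS : ∀ x y : F, (x ^ m * y ^ n) ^ N = x ^ m * y ^ n)
    (hsub : ∀ a b : F, a ^ N = a → b ^ N = b → (a - b) ^ N = a - b)
    (u v : F) {z : F × F}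
    (h : ReflTransGen (fun z w : F × F => z.2 + w.2 = z.1 ^ m * w.1 ^ n) (u, v) z) :
    (z.2 - v) ^ N = z.2 - v ∨ (z.2 + v) ^ N = z.2 + v := by
  induction h with
  | refl => left; simp [zero_pow (by omega : N ≠ 0)]
  | @tail b c h1 h2 ih =>
    have ha := hS b.1 c.1
    have hc2 : c.2 = b.1 ^ m * c.1 ^ n - b.2 := by rw [← h2]; ring
    rcases ih with ih | ih
    · right
      have : c.2 + v = b.1 ^ m * c.1 ^ n - (b.2 - v) := by rw [hc2]; ring
      rw [this]
      exact hsub _ _ ha ih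
    · left
      have : c.2 - v = b.1 ^ m * c.1 ^ n - (b.2 + v) := by rw [hc2]; ring
      rw [this]
      exact hsub _ _ ha ih

lemma aux_fix_S {p e es m n : ℕ} (hp : p.Prime) {F : Type*} [Field F] [Fintype F]
    (hF : Fintype.card F = p ^ e)
    (hm1 : 1 ≤ m) (hn1 : 1 ≤ n) (hesdvd : es ∣ e)
    (hqs : (p ^ e - 1) / (p ^ es - 1) ∣ Nat.gcd (p ^ e - 1) (Nat.gcd m n)) :
    ∀ x y : F, (x ^ m * y ^ n) ^ p ^ es = x ^ m * y ^ n := by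
  have hp2 := hp.two_le
  have ht : p ^ es - 1 ∣ p ^ e - 1 := aux_nt2 hesdvd
  have hkey : ∀ k : ℕ, Nat.gcd m n ∣ k → (∀ x : F, x ≠ 0 → x ^ (k * (p ^ es - 1)) = 1) := by
    intro k hk x hx
    have h1 : p ^ e - 1 ∣ k * (p ^ es - 1) := by
      have h2 : (p ^ e - 1) / (p ^ es - 1) ∣ k :=
        dvd_trans (dvd_trans hqs (Nat.gcd_dvd_right _ _)) hk
      calc p ^ e - 1 = (p ^ e - 1) / (p ^ es - 1) * (p ^ es - 1) :=
            (Nat.div_mul_cancel ht).symm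
        _ ∣ k * (p ^ es - 1) := mul_dvd_mul h2 dvd_rfl
    obtain ⟨c, hc⟩ := h1
    rw [hc, pow_mul, ← hF, FiniteField.pow_card_sub_one_eq_one x hx, one_pow]
  intro x y
  rcases eq_or_ne x 0 with rfl | hx
  · rw [zero_pow (by omega : m ≠ 0), zero_mul, zero_pow]
    exact (Nat.pos_of_ne_zero (fun h => by simp [pow_eq_zero_iff] at h ; omega)).ne'
  rcases eq_or_ne y 0 with rfl | hy
  · rw [zero_pow (by omega : n ≠ 0), mul_zero, zero_pow]
    positivity
  have hpes : p ^ es = (p ^ es - 1) + 1 := by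
    have := Nat.one_le_pow es p (by omega)
    omega
  have hxm := hkey m (Nat.gcd_dvd_left _ _) x hx
  have hyn := hkey n (Nat.gcd_dvd_right _ _) y hy
  rw [hpes, pow_succ, mul_pow, ← pow_mul, ← pow_mul, hxm, hyn, one_mul, one_mul]

lemma aux_closure_eq_fix {p e es m n d : ℕ} (hp : p.Prime) (he : 1 ≤ e)
    {F : Type*} [Field F] [Fintype F]
    (hF : Fintype.card F = p ^ e)
    (hm1 : 1 ≤ m) (hn1 : 1 ≤ n)
    (hd : d = Nat.gcd (p ^ e - 1) (Nat.gcd m n))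
    (hes1 : 1 ≤ es) (hesdvd : es ∣ e)
    (hqs : (p ^ e - 1) / (p ^ es - 1) ∣ d)
    (hmax : ∀ ei : ℕ, 1 ≤ ei → ei ∣ e → (p ^ e - 1) / (p ^ ei - 1) ∣ d →
      (p ^ e - 1) / (p ^ ei - 1) ≤ (p ^ e - 1) / (p ^ es - 1)) :
    (AddSubgroup.closure {a : F | ∃ x y : F, x ^ m * y ^ n = a} : Set F) =
      {c : F | c ^ p ^ es = c} := by
  classical
  have hp2 := hp.two_le
  haveI : Fact p.Prime := ⟨hp⟩
  have hchar : CharP F p := by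
    obtain ⟨n', hc, hcard⟩ := FiniteField.card F (ringChar F)
    have : ringChar F = p := by
      have h2 : ringChar F ∣ p ^ e := by
        rw [← hF, hcard]; exact dvd_pow_self _ n'.ne_zero
      have h3 := (Nat.Prime.prime hc).dvd_of_dvd_pow h2
      exact (Nat.prime_dvd_prime_iff_eq hc hp).mp h3
    rw [← this]; exact ringChar.charP F
  set S : Set F := {a : F | ∃ x y : F, x ^ m * y ^ n = a} with hSdef
  set A : AddSubgroup F := AddSubgroup.closure S with hAdef
  have hS0 : (0 : F) ∈ S := ⟨0, 0, by rw [zero_pow (by omega : m ≠ 0), zero_mul]⟩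
  have hS1 : (1 : F) ∈ S := ⟨1, 1, by simp⟩
  have hSmul : ∀ a ∈ S, ∀ b ∈ S, a * b ∈ S := by
    rintro a ⟨x, y, rfl⟩ b ⟨x', y', rfl⟩
    exact ⟨x * x', y * y', by rw [mul_pow, mul_pow]; ring⟩
  have hAmul : ∀ a ∈ A, ∀ b ∈ A, a * b ∈ A := by
    intro a ha
    induction ha using AddSubgroup.closure_induction with
    | mem a' ha' =>
      intro b hb
      induction hb using AddSubgroup.closure_induction with
      | mem b' hb' => exact AddSubgroup.subset_closure (hSmul _ ha' _ hb')
      | zero => rw [mul_zero]; exact A.zero_mem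
      | add b1 b2 hb1 hb2 ih1 ih2 => rw [mul_add]; exact A.add_mem ih1 ih2
      | neg b1 hb1 ih1 => rw [mul_neg]; exact A.neg_mem ih1
    | zero => intro b hb; rw [zero_mul]; exact A.zero_mem
    | add a1 a2 ha1 ha2 ih1 ih2 =>
      intro b hb; rw [add_mul]; exact A.add_mem (ih1 b hb) (ih2 b hb)
    | neg a1 ha1 ih1 =>
      intro b hb; rw [neg_mul]; exact A.neg_mem (ih1 b hb)
  have hA1 : (1 : F) ∈ A := AddSubgroup.subset_closure hS1
  have hpowmem : ∀ a ∈ A, ∀ k : ℕ, a ^ k ∈ A := by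
    intro a ha k
    induction k with
    | zero => rw [pow_zero]; exact hA1
    | succ k ih => rw [pow_succ]; exact hAmul _ ih _ ha
  -- the subgroup of units with value in A
  set H : Subgroup Fˣ :=
    { carrier := {u : Fˣ | (u : F) ∈ A}
      one_mem' := by simpa using hA1
      mul_mem' := fun {u} {w} hu hw => by
        simp only [Set.mem_setOf_eq, Units.val_mul] at *
        exact hAmul _ hu _ hw
      inv_mem' := fun {u} hu => by
        simp only [Set.mem_setOf_eq] at *
        have hr : u ⁻¹ = u ^ (orderOf u - 1) := by
          apply inv_eq_of_mul_eq_one_right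
          rw [← pow_succ']
          have : orderOf u - 1 + 1 = orderOf u := by
            have := orderOf_pos u; omega
          rw [this, pow_orderOf_eq_one]
        rw [hr, Units.val_pow_eq_pow_val]
        exact hpowmem _ hu _ } with hHdef
  -- card A = p^e'
  have hcardA : Nat.card A ∣ p ^ e := by
    have h1 : Nat.card A ∣ Nat.card F :=
      AddSubgroup.card_dvd_of_injective A.subtype (fun a b h => Subtype.ext h)
    simp only [Nat.card_eq_fintype_card] at h1 ⊢
    rwa [hF] at h1
  obtain ⟨e', he'le, hcard⟩ := (Nat.dvd_prime_pow hp).mp hcardA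
  have he'1 : 1 ≤ e' := by
    rcases Nat.eq_zero_or_pos e' with h | h
    · exfalso
      have hnt : Nontrivial A :=
        ⟨⟨0, A.zero_mem⟩, ⟨1, hA1⟩, fun hc => by
          have := congrArg Subtype.val hc; simp at this⟩
      have : (1 : ℕ) < Nat.card A := by
        rw [Nat.card_eq_fintype_card]
        exact Fintype.one_lt_card_iff_nontrivial.mpr hnt
      rw [hcard, h] at this; simp at this
    · exact h
  -- relate card H and card A
  have hsetA : (A : Set F) = insert (0 : F) (Units.val '' (H : Set Fˣ)) := by
    ext a
    constructor
    · intro ha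
      rcases eq_or_ne a 0 with rfl | ha0
      · exact Set.mem_insert _ _
      · exact Set.mem_insert_of_mem _ ⟨Units.mk0 a ha0, ha, rfl⟩
    · rintro (rfl | ⟨u, hu, rfl⟩)
      · exact A.zero_mem
      · exact hu
  have hcardH : Nat.card H = p ^ e' - 1 := by
    have h1 : (A : Set F).ncard = (Units.val '' (H : Set Fˣ)).ncard + 1 := by
      rw [hsetA]
      rw [Set.ncard_insert_of_notMem (by
        rintro ⟨u, hu, hval⟩
        exact Units.ne_zero u hval) (Set.toFinite _)]
    have h2 : (Units.val '' (H : Set Fˣ)).ncard = Nat.card H := by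
      rw [Set.ncard_image_of_injective _ Units.val_injective]
      exact (Nat.card_coe_set_eq _).symm
    have h3 : (A : Set F).ncard = p ^ e' := by
      rw [← Nat.card_coe_set_eq, ← hcard]; rfl
    omega
  have hudvd : p ^ e' - 1 ∣ p ^ e - 1 := by
    have h1 : Nat.card H ∣ Nat.card Fˣ := Subgroup.card_subgroup_dvd_card H
    rwa [hcardH, Nat.card_eq_fintype_card, Fintype.card_units, hF] at h1
  have he'dvd : e' ∣ e := aux_nt1 hp2 he'1 hudvd
  have hq1pos : 0 < p ^ e - 1 := by
    have := Nat.one_lt_pow (by omega : e ≠ 0) (by omega : 1 < p); omega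
  have hApow : ∀ a : F, a ≠ 0 → a ∈ A → a ^ (p ^ e' - 1) = 1 := by
    intro a ha haA
    have hu : Units.mk0 a ha ∈ H := haA
    have h1 : (⟨Units.mk0 a ha, hu⟩ : H) ^ Nat.card H = 1 := pow_card_eq_one'
    have h2 := congrArg (fun x : H => ((x : Fˣ) : F)) h1
    simp only [SubmonoidClass.coe_pow, Units.val_pow_eq_pow_val, Units.val_mk0,
      OneMemClass.coe_one, Units.val_one] at h2
    rwa [hcardH] at h2
  have hgen : ∀ k : ℕ, (∀ x : F, x ≠ 0 → x ^ k = 1) → p ^ e - 1 ∣ k := by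
    intro k hk
    obtain ⟨g, hg⟩ := IsCyclic.exists_generator (α := Fˣ)
    have horder : orderOf g = p ^ e - 1 := by
      rw [orderOf_eq_card_of_forall_mem_zpowers hg, Nat.card_eq_fintype_card,
        Fintype.card_units, hF]
    have hgk : g ^ k = 1 := by
      ext
      push_cast
      exact hk _ (Units.ne_zero g)
    rw [← horder]
    exact orderOf_dvd_of_pow_eq_one hgk
  have hmdvd : ∀ k : ℕ, (∀ x : F, x ^ k ∈ S) → (p ^ e - 1) / (p ^ e' - 1) ∣ k := by
    intro k hkS
    have h1 : p ^ e - 1 ∣ k * (p ^ e' - 1) := by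
      apply hgen
      intro x hx
      rw [pow_mul]
      exact hApow _ (pow_ne_zero _ hx) (AddSubgroup.subset_closure (hkS x))
    have ht' : p ^ e' - 1 ∣ p ^ e - 1 := aux_nt2 he'dvd
    have ht'pos : 0 < p ^ e' - 1 := by
      have := Nat.one_lt_pow (by omega : e' ≠ 0) (by omega : 1 < p); omega
    rw [← Nat.div_mul_cancel ht'] at h1
    exact (Nat.mul_dvd_mul_iff_right ht'pos).mp h1
  have hdm : (p ^ e - 1) / (p ^ e' - 1) ∣ m := by
    apply hmdvd; intro x; exact ⟨x, 1, by simp⟩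
  have hdn : (p ^ e - 1) / (p ^ e' - 1) ∣ n := by
    apply hmdvd; intro y; exact ⟨1, y, by simp⟩
  have ht' : p ^ e' - 1 ∣ p ^ e - 1 := aux_nt2 he'dvd
  have hdd : (p ^ e - 1) / (p ^ e' - 1) ∣ d := by
    rw [hd]
    exact Nat.dvd_gcd (Nat.div_dvd_of_dvd ht') (Nat.dvd_gcd hdm hdn)
  have hle := hmax e' he'1 he'dvd hdd
  have hts : p ^ es - 1 ∣ p ^ e - 1 := aux_nt2 hesdvd
  have htspos : 0 < p ^ es - 1 := by
    have := Nat.one_lt_pow (by omega : es ≠ 0) (by omega : 1 < p); omega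
  have ht'pos : 0 < p ^ e' - 1 := by
    have := Nat.one_lt_pow (by omega : e' ≠ 0) (by omega : 1 < p); omega
  have hlees : p ^ es - 1 ≤ p ^ e' - 1 := by
    have h1 : 0 < (p ^ e - 1) / (p ^ e' - 1) :=
      Nat.div_pos (Nat.le_of_dvd hq1pos ht') ht'pos
    have h2 := Nat.div_le_div_left (a := p ^ e - 1) hle h1
    rwa [Nat.div_div_self ht' (by omega), Nat.div_div_self hts (by omega)] at h2
  have hfixgrp : ∀ a b : F, a ^ p ^ es = a → b ^ p ^ es = b → (a - b) ^ p ^ es = a - b := by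
    intro a b ha hb
    rw [sub_pow_char_pow, ha, hb]
  have hAfix : (A : Set F) ⊆ {c : F | c ^ p ^ es = c} := by
    intro a ha
    induction ha using AddSubgroup.closure_induction with
    | mem a' ha' =>
      obtain ⟨x, y, rfl⟩ := ha'
      exact aux_fix_S hp hF hm1 hn1 hesdvd (hd ▸ hqs) x y
    | zero => simp [zero_pow (by positivity : p ^ es ≠ 0)]
    | add a1 a2 h1 h2 ih1 ih2 =>
      have hz : (0 : F) ^ p ^ es = 0 := by
        simp [zero_pow (by positivity : p ^ es ≠ 0)]
      have := hfixgrp a1 (-a2) ih1 (by simpa using hfixgrp 0 a2 hz ih2)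
      simpa [sub_neg_eq_add] using this
    | neg a1 h1 ih1 =>
      have hz : (0 : F) ^ p ^ es = 0 := by
        simp [zero_pow (by positivity : p ^ es ≠ 0)]
      simpa using hfixgrp 0 a1 hz ih1
  have hcount : {c : F | c ^ p ^ es = c}.ncard ≤ (A : Set F).ncard := by
    have h1 : {c : F | c ^ p ^ es = c}.ncard ≤ p ^ es :=
      aux_card_fix (Nat.one_lt_pow (by omega : es ≠ 0) (by omega : 1 < p))
    have h2 : (A : Set F).ncard = p ^ e' := by
      rw [← Nat.card_coe_set_eq, ← hcard]; rfl
    have h3 : p ^ es ≤ p ^ e' := by omega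
    omega
  exact Set.eq_of_subset_of_ncard_le hAfix hcount (Set.toFinite _)

/-- For the monomial digraph `D(q;m,n)` with `d = gcd(q-1,m,n)` and
`q_s = (q-1)/(p^{e_s}-1)` the largest `q_i` dividing `d`, the strong component of a
vertex `(u,v)` is `{(x, v + c) : x ∈ F_q, c ∈ K} ∪ {(x, -v + c) : x ∈ F_q, c ∈ K}`,
where `K` is the subfield with `p^{e_s}` elements; in particular `D(q;m,n)` is strong
iff `q_s = 1`, equivalently `e_s = e`. -/
theorem stmt_17 {p e : ℕ} (hp : p.Prime) (he : 1 ≤ e)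
    {F : Type*} [Field F] [Fintype F]
    (hF : Fintype.card F = p ^ e)
    (m n : ℕ) (hm1 : 1 ≤ m) (hm2 : m ≤ p ^ e - 1) (hn1 : 1 ≤ n) (hn2 : n ≤ p ^ e - 1)
    (d : ℕ) (hd : d = Nat.gcd (p ^ e - 1) (Nat.gcd m n))
    (es : ℕ) (hes1 : 1 ≤ es) (hesdvd : es ∣ e)
    (hqs : (p ^ e - 1) / (p ^ es - 1) ∣ d)
    (hmax : ∀ ei : ℕ, 1 ≤ ei → ei ∣ e → (p ^ e - 1) / (p ^ ei - 1) ∣ d →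
      (p ^ e - 1) / (p ^ ei - 1) ≤ (p ^ e - 1) / (p ^ es - 1)) :
    (∀ u v : F,
      {z : F × F |
          ReflTransGen (fun z w : F × F => z.2 + w.2 = z.1 ^ m * w.1 ^ n) (u, v) z ∧
          ReflTransGen (fun z w : F × F => z.2 + w.2 = z.1 ^ m * w.1 ^ n) z (u, v)} =
        {z : F × F | ∃ x c : F, c ^ p ^ es = c ∧ z = (x, v + c)} ∪
        {z : F × F | ∃ x c : F, c ^ p ^ es = c ∧ z = (x, -v + c)}) ∧
    ((∀ z w : F × F,
        ReflTransGen (fun z w : F × F => z.2 + w.2 = z.1 ^ m * w.1 ^ n) z w) ↔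
      (p ^ e - 1) / (p ^ es - 1) = 1) ∧
    ((p ^ e - 1) / (p ^ es - 1) = 1 ↔ es = e) := by
  have hp2 := hp.two_le
  haveI : Fact p.Prime := ⟨hp⟩
  have hchar : CharP F p := by
    obtain ⟨n', hc, hcard⟩ := FiniteField.card F (ringChar F)
    have : ringChar F = p := by
      have h2 : ringChar F ∣ p ^ e := by
        rw [← hF, hcard]; exact dvd_pow_self _ n'.ne_zero
      have h3 := (Nat.Prime.prime hc).dvd_of_dvd_pow h2
      exact (Nat.prime_dvd_prime_iff_eq hc hp).mp h3
    rw [← this]; exact ringChar.charP F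
  have hfixq := aux_closure_eq_fix hp he hF hm1 hn1 hd hes1 hesdvd hqs hmax
  have hfixS : ∀ x y : F, (x ^ m * y ^ n) ^ p ^ es = x ^ m * y ^ n :=
    aux_fix_S hp hF hm1 hn1 hesdvd (hd ▸ hqs)
  have hNpos : 1 ≤ p ^ es := Nat.one_le_pow _ _ (by omega)
  have hsub : ∀ a b : F, a ^ p ^ es = a → b ^ p ^ es = b →
      (a - b) ^ p ^ es = a - b := by
    intro a b ha hb
    rw [sub_pow_char_pow, ha, hb]
  have part1 : ∀ u v : F,
      {z : F × F |
          ReflTransGen (fun z w : F × F => z.2 + w.2 = z.1 ^ m * w.1 ^ n) (u, v) z ∧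
          ReflTransGen (fun z w : F × F => z.2 + w.2 = z.1 ^ m * w.1 ^ n) z (u, v)} =
        {z : F × F | ∃ x c : F, c ^ p ^ es = c ∧ z = (x, v + c)} ∪
        {z : F × F | ∃ x c : F, c ^ p ^ es = c ∧ z = (x, -v + c)} := by
    intro u v
    ext z
    simp only [Set.mem_setOf_eq, Set.mem_union]
    constructor
    · rintro ⟨h1, _⟩
      rcases aux_invariant hNpos hfixS hsub u v h1 with hiv | hiv
      · left
        exact ⟨z.1, z.2 - v, hiv, by rw [add_sub_cancel]⟩
      · right
        refine ⟨z.1, z.2 + v, hiv, ?_⟩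
        rw [neg_add_eq_sub, add_sub_cancel_right]
    · have hmemA : ∀ c : F, c ^ p ^ es = c →
          c ∈ AddSubgroup.closure {a : F | ∃ x y : F, x ^ m * y ^ n = a} := by
        intro c hc
        rw [← SetLike.mem_coe, hfixq]
        exact hc
      rintro (⟨x, c, hc, rfl⟩ | ⟨x, c, hc, rfl⟩)
      · have h := (aux_reach_of_closure hm1 hn1 u v c (hmemA c hc) x).1
        exact ⟨h, aux_reach_symm hm1 hn1 h⟩
      · have h := (aux_reach_of_closure hm1 hn1 u v c (hmemA c hc) x).2
        exact ⟨h, aux_reach_symm hm1 hn1 h⟩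
  have hq1pos : 0 < p ^ e - 1 := by
    have := Nat.one_lt_pow (by omega : e ≠ 0) (by omega : 1 < p); omega
  have htspos : 0 < p ^ es - 1 := by
    have := Nat.one_lt_pow (by omega : es ≠ 0) (by omega : 1 < p); omega
  have part3 : (p ^ e - 1) / (p ^ es - 1) = 1 ↔ es = e := by
    constructor
    · intro h
      have hts : p ^ es - 1 ∣ p ^ e - 1 := aux_nt2 hesdvd
      have h1 := Nat.div_mul_cancel hts
      rw [h, one_mul] at h1
      have h2 : 1 ≤ p ^ es := Nat.one_le_pow _ _ (by omega)
      have h3 : 1 ≤ p ^ e := Nat.one_le_pow _ _ (by omega)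
      exact Nat.pow_right_injective hp2 (show p ^ es = p ^ e by omega)
    · rintro rfl
      exact Nat.div_self hq1pos
  refine ⟨part1, ⟨?_, ?_⟩, part3⟩
  · intro hstrong
    have hall : ∀ c : F, c ^ p ^ es = c := by
      intro c
      have hmem : ((0, c) : F × F) ∈
          {z : F × F |
            ReflTransGen (fun z w : F × F => z.2 + w.2 = z.1 ^ m * w.1 ^ n) (0, 0) z ∧
            ReflTransGen (fun z w : F × F => z.2 + w.2 = z.1 ^ m * w.1 ^ n) z (0, 0)} :=
        ⟨hstrong _ _, hstrong _ _⟩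
      rw [part1 0 0] at hmem
      rcases hmem with ⟨x, c', hc', heq⟩ | ⟨x, c', hc', heq⟩ <;>
      · rw [Prod.mk.injEq] at heq
        obtain ⟨-, h2⟩ := heq
        simp only [zero_add, neg_zero] at h2
        rwa [h2]
    have h1 : {c : F | c ^ p ^ es = c} = Set.univ := by
      ext c; simp [hall c]
    have h2 := aux_card_fix (F := F) (Nat.one_lt_pow (by omega : es ≠ 0) (by omega : 1 < p))
    rw [h1, Set.ncard_univ, Nat.card_eq_fintype_card, hF] at h2
    have h3 : e ≤ es := (Nat.pow_le_pow_iff_right (by omega : 1 < p)).mp h2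
    have h4 : es ≤ e := Nat.le_of_dvd (by omega) hesdvd
    exact part3.mpr (by omega)
  · intro h
    have hese : es = e := part3.mp h
    subst hese
    intro z w
    have hmem : w ∈
        {z' : F × F | ∃ x c : F, c ^ p ^ es = c ∧ z' = (x, z.2 + c)} ∪
        {z' : F × F | ∃ x c : F, c ^ p ^ es = c ∧ z' = (x, -z.2 + c)} := by
      left
      refine ⟨w.1, w.2 - z.2, ?_, ?_⟩
      · rw [← hF]
        exact FiniteField.pow_card _
      · rw [add_sub_cancel]
    rw [← part1 z.1 z.2] at hmem
    exact hmem.1
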